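/- With a_k² = binom(n, k−1), the symmetrized vectors |φ_k⟩ = a_k^{-1} |ψ_1⟩^{⊗(n−k+1)} ⊗_S |ψ_2⟩^{⊗(k−1)} ∈ A(S^7_{θ'})^{4^n} (k = 1,...,n+1) satisfy ⟨φ_k | φ_l⟩ = δ_{kl}, so that p_(n) = Σ_{k=1}^{n+1} |φ_k⟩⟨φ_k| is a projection in Mat_{4^n}(A(S^7_{θ'})), p_(n)² = p_(n) = p_(n)*. -/

import Mathlib

noncomputable section

/-- The deformation matrix λ'^{ij} of the sphere S^7_{θ'}: λ'^{12}=λ'^{34}=1 and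
λ'^{13}=λ'^{14}=λ'^{23}=λ'^{24}=μ (indices 0-based), with λ'^{ji} = (λ'^{ij})⁻¹. -/
def lam7 (μ : ℂ) (i j : Fin 4) : ℂ :=
  if ((i : ℕ) < 2 ∧ (j : ℕ) < 2) ∨ (2 ≤ (i : ℕ) ∧ 2 ≤ (j : ℕ)) then 1
  else if (i : ℕ) < 2 then μ else μ⁻¹

variable {A : Type} [Ring A] [Algebra ℂ A] [StarRing A] [StarModule ℂ A]

/-- The defining relations of A(S^7_{θ'}): commutation relations among the generators and
their adjoints, and the sphere relation Σ_i z^i z̄^i = 1. -/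
def S7Rel (μ : ℂ) (z : Fin 4 → A) : Prop :=
  (∀ i j, z i * z j = lam7 μ i j • (z j * z i)) ∧
  (∀ i j, star (z i) * z j = lam7 μ j i • (z j * star (z i))) ∧
  (∀ i j, star (z i) * star (z j) = lam7 μ i j • (star (z j) * star (z i))) ∧
  (∑ i, z i * star (z i)) = 1

/-- α = 2(z^1 z̄^3 + z^2 z̄^4). -/
def elA (z : Fin 4 → A) : A := 2 * (z 0 * star (z 2) + z 1 * star (z 3))

/-- β = 2(−z^1 z^4 + z^2 z^3). -/
def elB (z : Fin 4 → A) : A := 2 * (-(z 0 * z 3) + z 1 * z 2)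

/-- x = z^1 z̄^1 + z^2 z̄^2 − z^3 z̄^3 − z^4 z̄^4. -/
def elX (z : Fin 4 → A) : A :=
  z 0 * star (z 0) + z 1 * star (z 1) - z 2 * star (z 2) - z 3 * star (z 3)

/-- |ψ_1⟩ = (z^1, −z̄^2, z^3, −z̄^4)^t. -/
def psi1 (z : Fin 4 → A) : Fin 4 → A := ![z 0, -star (z 1), z 2, -star (z 3)]

/-- |ψ_2⟩ = (z^2, z̄^1, z^4, z̄^3)^t. -/
def psi2 (z : Fin 4 → A) : Fin 4 → A := ![z 1, star (z 0), z 3, star (z 2)]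

/-- The projection p = |ψ_1⟩⟨ψ_1| + |ψ_2⟩⟨ψ_2| as a 4×4 matrix. -/
def projP (z : Fin 4 → A) : Matrix (Fin 4) (Fin 4) A :=
  fun i j => psi1 z i * star (psi1 z j) + psi2 z i * star (psi2 z j)

/-- The normalized symmetrized vector |φ_k⟩ = a_k⁻¹ |ψ_1⟩^{⊗(n−k+1)} ⊗_S |ψ_2⟩^{⊗(k−1)}
(k-1 factors of ψ_2, here k : Fin (n+1) is the number of ψ_2 factors), a_k² = binom(n,k−1),
as an element of A^{4^n} with 4^n indexed by multi-indices Fin n → Fin 4. -/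
def phiVec (z : Fin 4 → A) (n : ℕ) (k : Fin (n + 1)) (m : Fin n → Fin 4) : A :=
  (((Real.sqrt (n.choose (k : ℕ)))⁻¹ : ℝ) : ℂ) •
    ∑ S ∈ Finset.powersetCard (k : ℕ) (Finset.univ : Finset (Fin n)),
      ((List.finRange n).map (fun j => if j ∈ S then psi2 z (m j) else psi1 z (m j))).prod

/-- The projection p_(n) = Σ_{k} |φ_k⟩⟨φ_k| ∈ Mat_{4^n}(A(S^7_{θ'})). -/
def projPn (z : Fin 4 → A) (n : ℕ) : Matrix (Fin n → Fin 4) (Fin n → Fin 4) A :=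
  fun m m' => ∑ k : Fin (n + 1), phiVec z n k m * star (phiVec z n k m')


section Aux

variable {A : Type} [Ring A] [Algebra ℂ A] [StarRing A] [StarModule ℂ A]

/-- The pair (ψ₁, ψ₂) as a function on `Fin 2`. -/
def psiPair (z : Fin 4 → A) : Fin 2 → Fin 4 → A := ![psi1 z, psi2 z]

lemma psi_ortho (μ : ℂ) (z : Fin 4 → A) (hrel : S7Rel μ z) (a b : Fin 2) :
    (∑ i, star (psiPair z a i) * psiPair z b i) = if a = b then 1 else 0 := by
  obtain ⟨h1, h2, h3, h4⟩ := hrel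
  have comm : ∀ i j : Fin 4, lam7 μ j i = 1 → star (z i) * z j = z j * star (z i) := by
    intro i j h; rw [h2 i j, h, one_smul]
  have c00 := comm 0 0 (by rw [lam7, if_pos (by decide)])
  have c11 := comm 1 1 (by rw [lam7, if_pos (by decide)])
  have c22 := comm 2 2 (by rw [lam7, if_pos (by decide)])
  have c33 := comm 3 3 (by rw [lam7, if_pos (by decide)])
  have c01 := comm 0 1 (by rw [lam7, if_pos (by decide)])
  have c10 := comm 1 0 (by rw [lam7, if_pos (by decide)])
  have c23 := comm 2 3 (by rw [lam7, if_pos (by decide)])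
  have c32 := comm 3 2 (by rw [lam7, if_pos (by decide)])
  rw [Fin.sum_univ_four] at h4
  fin_cases a <;> fin_cases b <;>
    simp [psiPair, psi1, psi2, Fin.sum_univ_four]
  · rw [c00, c22, ← h4]
  · rw [c01, c23]; abel
  · rw [c10, c32]; abel
  · rw [c11, c33, ← h4]; abel

lemma prod_ortho (z : Fin 4 → A)
    (hpsi : ∀ a b : Fin 2, (∑ i, star (psiPair z a i) * psiPair z b i) = if a = b then 1 else 0) :
    ∀ n (t t' : Fin n → Fin 2),
      (∑ m : Fin n → Fin 4,
          star (((List.finRange n).map fun j => psiPair z (t j) (m j)).prod) *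
            ((List.finRange n).map fun j => psiPair z (t' j) (m j)).prod) =
        if t = t' then 1 else 0 := by
  intro n
  induction n with
  | zero =>
    intro t t'
    simp [Subsingleton.elim t t']
  | succ n ih =>
    intro t t'
    have hsum : ∀ f : (Fin (n + 1) → Fin 4) → A,
        (∑ m, f m) = ∑ p : Fin n → Fin 4, ∑ x : Fin 4, f (Fin.cons x p) := by
      intro f
      rw [← (Fin.consEquiv (fun _ : Fin (n + 1) => Fin 4)).sum_comp f,
        Fintype.sum_prod_type, Finset.sum_comm]
      rfl
    have hprod : ∀ (s : Fin (n + 1) → Fin 2) (x : Fin 4) (p : Fin n → Fin 4),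
        ((List.finRange (n + 1)).map fun j => psiPair z (s j) ((Fin.cons x p : Fin (n+1) → Fin 4) j)).prod =
          psiPair z (s 0) x *
            ((List.finRange n).map fun j => psiPair z (s j.succ) (p j)).prod := by
      intro s x p
      rw [List.finRange_succ]
      simp [List.map_map, Function.comp_def, Fin.cons_succ, Fin.cons_zero]
    rw [hsum]
    have step : ∀ p : Fin n → Fin 4,
        (∑ x : Fin 4,
          star (((List.finRange (n + 1)).map fun j => psiPair z (t j) ((Fin.cons x p : Fin (n+1) → Fin 4) j)).prod) *
            ((List.finRange (n + 1)).map fun j => psiPair z (t' j) ((Fin.cons x p : Fin (n+1) → Fin 4) j)).prod) =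
        star (((List.finRange n).map fun j => psiPair z (t j.succ) (p j)).prod) *
          ((if t 0 = t' 0 then (1 : A) else 0) *
            ((List.finRange n).map fun j => psiPair z (t' j.succ) (p j)).prod) := by
      intro p
      rw [← hpsi (t 0) (t' 0), Finset.sum_mul, Finset.mul_sum]
      refine Finset.sum_congr rfl fun x _ => ?_
      rw [hprod, hprod, star_mul]
      noncomm_ring
    simp_rw [step]
    by_cases h0 : t 0 = t' 0
    · have hiff : ((fun j : Fin n => t j.succ) = fun j : Fin n => t' j.succ) ↔ t = t' := by
        constructor
        · intro h
          funext j
          induction j using Fin.cases with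
          | zero => exact h0
          | succ i => exact congr_fun h i
        · intro h; rw [h]
      simp only [h0, if_true, one_mul, reduceIte]
      rw [ih (fun j => t j.succ) (fun j => t' j.succ), if_congr hiff rfl rfl]
    · have hne : t ≠ t' := fun h => h0 (by rw [h])
      simp [h0, hne]

lemma indicator_inj {n : ℕ} (S T : Finset (Fin n)) :
    ((fun j => if j ∈ S then (1 : Fin 2) else 0) = fun j => if j ∈ T then 1 else 0) ↔ S = T := by
  constructor
  · intro h
    ext j
    have hj := congr_fun h j
    by_cases hS : j ∈ S <;> by_cases hT : j ∈ T <;> simp [hS, hT] at hj ⊢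
  · rintro rfl; rfl

lemma phi_inner (μ : ℂ) (z : Fin 4 → A) (hrel : S7Rel μ z) (n : ℕ) (k l : Fin (n + 1)) :
    (∑ m : Fin n → Fin 4, star (phiVec z n k m) * phiVec z n l m) = if k = l then 1 else 0 := by
  have hpo := prod_ortho z (psi_ortho μ z hrel) n
  have hterm : ∀ (kk : Fin (n + 1)) (m : Fin n → Fin 4),
      phiVec z n kk m = (((Real.sqrt (n.choose (kk : ℕ)))⁻¹ : ℝ) : ℂ) •
        ∑ S ∈ Finset.powersetCard (kk : ℕ) (Finset.univ : Finset (Fin n)),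
          ((List.finRange n).map fun j => psiPair z (if j ∈ S then 1 else 0) (m j)).prod := by
    intro kk m
    unfold phiVec
    congr 1
    refine Finset.sum_congr rfl fun S _ => ?_
    have he : (fun j => if j ∈ S then psi2 z (m j) else psi1 z (m j)) =
        fun j => psiPair z (if j ∈ S then 1 else 0) (m j) := by
      funext j
      by_cases h : j ∈ S <;> simp [h, psiPair]
    rw [he]
  set ck : ℂ := (((Real.sqrt (n.choose (k : ℕ)))⁻¹ : ℝ) : ℂ) with hck
  set cl : ℂ := (((Real.sqrt (n.choose (l : ℕ)))⁻¹ : ℝ) : ℂ) with hcl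
  have hstar_ck : star ck = ck := by
    rw [hck, Complex.star_def, Complex.conj_ofReal]
  have main : (∑ m : Fin n → Fin 4, star (phiVec z n k m) * phiVec z n l m) =
      (ck * cl) • ∑ S ∈ Finset.powersetCard (k : ℕ) (Finset.univ : Finset (Fin n)),
        ∑ T ∈ Finset.powersetCard (l : ℕ) (Finset.univ : Finset (Fin n)),
          (if S = T then (1 : A) else 0) := by
    simp_rw [hterm, star_smul, Complex.star_def, Complex.conj_ofReal, smul_mul_assoc, mul_smul_comm, star_sum,
      Finset.sum_mul, Finset.mul_sum]
    rw [← Finset.smul_sum, ← Finset.smul_sum, smul_smul]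
    congr 1
    rw [Finset.sum_comm]
    refine Finset.sum_congr rfl fun S _ => ?_
    rw [Finset.sum_comm]
    refine Finset.sum_congr rfl fun T _ => ?_
    have := hpo (fun j => if j ∈ S then 1 else 0) (fun j => if j ∈ T then 1 else 0)
    rw [← if_congr (indicator_inj S T) rfl rfl, ← this]
  rw [main]
  by_cases hkl : k = l
  · subst hkl
    have hcard : ∀ S ∈ Finset.powersetCard (k : ℕ) (Finset.univ : Finset (Fin n)),
        (∑ T ∈ Finset.powersetCard (k : ℕ) (Finset.univ : Finset (Fin n)),
          (if S = T then (1 : A) else 0)) = 1 := by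
      intro S hS
      rw [Finset.sum_ite_eq, if_pos hS]
    rw [Finset.sum_congr rfl hcard, Finset.sum_const, Finset.card_powersetCard,
      Finset.card_univ, Fintype.card_fin]
    have hkn : (k : ℕ) ≤ n := Nat.lt_succ_iff.mp k.isLt
    have hC : (0 : ℕ) < n.choose (k : ℕ) := Nat.choose_pos hkn
    have hCne : ((n.choose (k : ℕ) : ℝ)) ≠ 0 := by positivity
    have hcc : ck * cl = ((n.choose (k : ℕ) : ℂ))⁻¹ := by
      rw [hck, hcl, ← Complex.ofReal_mul, ← mul_inv,
        Real.mul_self_sqrt (by positivity), Complex.ofReal_inv, Complex.ofReal_natCast]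
    rw [hcc, if_pos rfl]
    have : ((n.choose (k : ℕ) : ℕ) • (1 : A)) = ((n.choose (k : ℕ) : ℂ)) • (1 : A) := by
      simp [nsmul_eq_mul, Algebra.smul_def]
    rw [this, smul_smul, inv_mul_cancel₀ (by exact_mod_cast hC.ne')]
    simp
  · have hz : ∀ S ∈ Finset.powersetCard (k : ℕ) (Finset.univ : Finset (Fin n)),
        (∑ T ∈ Finset.powersetCard (l : ℕ) (Finset.univ : Finset (Fin n)),
          (if S = T then (1 : A) else 0)) = 0 := by
      intro S hS
      rw [Finset.sum_ite_eq, if_neg]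
      intro hmem
      apply hkl
      have h1 := (Finset.mem_powersetCard.mp hS).2
      have h2 := (Finset.mem_powersetCard.mp hmem).2
      exact Fin.ext (h1 ▸ h2)
    rw [Finset.sum_congr rfl hz, Finset.sum_const, smul_zero, smul_zero, if_neg hkl]

end Aux

/-- The symmetrized vectors |φ_k⟩ satisfy ⟨φ_k|φ_l⟩ = δ_{kl}, so that
p_(n) = Σ_k |φ_k⟩⟨φ_k| is a projection: p_(n)² = p_(n) = p_(n)*. -/
theorem stmt10 (μ : ℂ) (z : Fin 4 → A) (hrel : S7Rel μ z) (n : ℕ) (hn : 0 < n) :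
    (∀ k l : Fin (n + 1),
      (∑ m : Fin n → Fin 4, star (phiVec z n k m) * phiVec z n l m) =
        if k = l then 1 else 0) ∧
    projPn z n * projPn z n = projPn z n ∧
    star (projPn z n) = projPn z n := by
  have hinner := phi_inner μ z hrel n
  refine ⟨hinner, ?_, ?_⟩
  · ext m m'
    rw [Matrix.mul_apply]
    show _ = projPn z n m m'
    unfold projPn
    calc (∑ m'' : Fin n → Fin 4,
            (∑ k : Fin (n + 1), phiVec z n k m * star (phiVec z n k m'')) *
              ∑ l : Fin (n + 1), phiVec z n l m'' * star (phiVec z n l m'))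
        = ∑ k : Fin (n + 1), ∑ l : Fin (n + 1),
            phiVec z n k m *
              (∑ m'' : Fin n → Fin 4, star (phiVec z n k m'') * phiVec z n l m'') *
                star (phiVec z n l m') := by
          simp_rw [Finset.sum_mul, Finset.mul_sum]
          rw [Finset.sum_comm]
          refine Finset.sum_congr rfl fun k _ => ?_
          rw [Finset.sum_comm]
          refine Finset.sum_congr rfl fun l _ => ?_
          rw [Finset.sum_mul]
          simp_rw [mul_assoc]
      _ = ∑ k : Fin (n + 1), phiVec z n k m * star (phiVec z n k m') := by
          simp_rw [hinner]
          simp [Finset.sum_ite_eq, mul_ite, ite_mul]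
  · ext m m'
    rw [Matrix.star_apply]
    show _ = projPn z n m m'
    unfold projPn
    rw [star_sum]
    simp [star_mul, star_star]
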